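/- The coproduct Δ_h on k[Y^∞]_h is an algebra homomorphism: Δ_h(t ∗_h s) = Δ_h(t) ∗_h Δ_h(s), where the product on the tensor square is componentwise. -/

import Mathlib

/-- Genus-labelled graphs: `one` is the trivial graph `1 = |`, `vee` is grafting `∨`,
and `br` is the bridge operation `⌒` (which creates a loop). -/
inductive G where
  | one : G
  | vee : G → G → G
  | br : G → G → G
deriving DecidableEq

namespace G

/-- The order of a graph: the number of internal vertices of the underlying tree. -/
def order : G → ℕ
  | one => 0
  | vee a b => order a + order b + 1
  | br a b => order a + order b + 1

/-- The genus (loop number) of a graph. -/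
def genus : G → ℕ
  | one => 0
  | vee a b => genus a + genus b
  | br a b => genus a + genus b + 1

/-- The number of free (uncontracted) leaves of a graph. -/
def freeLeaves : G → ℕ
  | one => 1
  | vee a b => freeLeaves a + freeLeaves b
  | br a b => freeLeaves a + freeLeaves b - 2

/-- A graph is regular when every bridge genuinely contracts two free leaves;
irregular graphs are those in which some leaf is involved in more than one loop
contraction. -/
def Regular : G → Prop
  | one => True
  | vee a b => Regular a ∧ Regular b
  | br a b => Regular a ∧ Regular b ∧ 1 ≤ freeLeaves a ∧ 1 ≤ freeLeaves b

end G

/-- The quantized product `∗_h` on basis graphs, with values in the free `k`-module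
`k[Y^∞]_h`: `t ∗_h 1 = 1 ∗_h t = t` and
`(t₁∘t₂) ∗_h (s₁∘'s₂) = ((t₁∘t₂) ∗_h s₁) ∘' s₂ + t₁ ∘ (t₂ ∗_h (s₁∘'s₂))`
for `∘, ∘' ∈ {∨, ⌒}`. -/
noncomputable def G.hstar (k : Type*) [CommRing k] : G → G → (G →₀ k)
  | .one, t => Finsupp.single t 1
  | .vee a b, .one => Finsupp.single (.vee a b) 1
  | .br a b, .one => Finsupp.single (.br a b) 1
  | .vee a b, .vee c d =>
      Finsupp.mapDomain (fun u => G.vee u d) (G.hstar k (.vee a b) c)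
      + Finsupp.mapDomain (fun u => G.vee a u) (G.hstar k b (.vee c d))
  | .vee a b, .br c d =>
      Finsupp.mapDomain (fun u => G.br u d) (G.hstar k (.vee a b) c)
      + Finsupp.mapDomain (fun u => G.vee a u) (G.hstar k b (.br c d))
  | .br a b, .vee c d =>
      Finsupp.mapDomain (fun u => G.vee u d) (G.hstar k (.br a b) c)
      + Finsupp.mapDomain (fun u => G.br a u) (G.hstar k b (.vee c d))
  | .br a b, .br c d =>
      Finsupp.mapDomain (fun u => G.br u d) (G.hstar k (.br a b) c)
      + Finsupp.mapDomain (fun u => G.br a u) (G.hstar k b (.br c d))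
termination_by t s => t.order + s.order
decreasing_by all_goals simp [G.order] <;> omega

/-- The bilinear extension of `∗_h` to the free `k`-module `k[Y^∞]_h`. -/
noncomputable def G.hstarL (k : Type*) [CommRing k] (x y : G →₀ k) : G →₀ k :=
  x.sum fun t a => y.sum fun s b => (a * b) • G.hstar k t s

/-- The one-loop graph `O = | ⌒ |`. -/
def G.O : G := G.br G.one G.one

/-- The one-vertex tree `T = | ∨ |`. -/
def G.T : G := G.vee G.one G.one

/-- The quantized coproduct `Δ_h : k[Y^∞]_h → k[Y^∞]_h ⊗ k[Y^∞]_h`, where the tensor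
square of the free module on `G` is modelled as the free module on `G × G`:
`Δ_h(1) = 1⊗1` and `Δ_h(t₁∘t₂) = Σ (t₁' ∗_h t₂') ⊗ (t₁'' ∘ t₂'') + (t₁∘t₂) ⊗ 1`
for `∘ ∈ {∨, ⌒}`, in Sweedler notation. -/
noncomputable def G.cop (k : Type*) [CommRing k] : G → ((G × G) →₀ k)
  | .one => Finsupp.single (.one, .one) 1
  | .vee a b =>
      ((G.cop k a).sum fun p ca => (G.cop k b).sum fun q cb =>
        (ca * cb) • Finsupp.mapDomain (fun u => (u, G.vee p.2 q.2)) (G.hstar k p.1 q.1))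
      + Finsupp.single (G.vee a b, G.one) 1
  | .br a b =>
      ((G.cop k a).sum fun p ca => (G.cop k b).sum fun q cb =>
        (ca * cb) • Finsupp.mapDomain (fun u => (u, G.br p.2 q.2)) (G.hstar k p.1 q.1))
      + Finsupp.single (G.br a b, G.one) 1

/-- The tensor product of two elements of `k[Y^∞]_h`, in the free-module-on-`G × G`
model of the tensor square. -/
noncomputable def tensorMul (k : Type*) [CommRing k] (x y : G →₀ k) : (G × G) →₀ k :=
  x.sum fun u a => y.sum fun v b => Finsupp.single (u, v) (a * b)

/-- The componentwise product on the tensor square of `k[Y^∞]_h`. -/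
noncomputable def prodT (k : Type*) [CommRing k] (x y : (G × G) →₀ k) : (G × G) →₀ k :=
  x.sum fun p c => y.sum fun q d =>
    (c * d) • tensorMul k (G.hstar k p.1 q.1) (G.hstar k p.2 q.2)

namespace S14
open Finsupp

variable (k : Type*) [CommRing k]

/-- Uniform node constructor: `nod true = vee`, `nod false = br`. -/
def nod : Bool → G → G → G
  | true, a, b => .vee a b
  | false, a, b => .br a b

@[simp] lemma nod_order (o : Bool) (a b : G) : (nod o a b).order = a.order + b.order + 1 := by
  cases o <;> rfl

lemma nod_cases (t : G) : t = G.one ∨ ∃ o a b, t = nod o a b := by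
  cases t with
  | one => exact Or.inl rfl
  | vee a b => exact Or.inr ⟨true, a, b, rfl⟩
  | br a b => exact Or.inr ⟨false, a, b, rfl⟩

lemma order_eq_zero {t : G} (h : t.order = 0) : t = G.one := by
  cases t with
  | one => rfl
  | vee a b => simp [G.order] at h
  | br a b => simp [G.order] at h

noncomputable def star : (G →₀ k) →ₗ[k] (G →₀ k) →ₗ[k] (G →₀ k) :=
  Finsupp.linearCombination k fun t => Finsupp.linearCombination k fun s => G.hstar k t s

noncomputable def graft (o : Bool) : (G →₀ k) →ₗ[k] (G →₀ k) →ₗ[k] (G →₀ k) :=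
  Finsupp.linearCombination k fun a => Finsupp.linearCombination k fun b =>
    Finsupp.single (nod o a b) (1 : k)

noncomputable def tm : (G →₀ k) →ₗ[k] (G →₀ k) →ₗ[k] ((G × G) →₀ k) :=
  Finsupp.linearCombination k fun u => Finsupp.linearCombination k fun v =>
    Finsupp.single (u, v) (1 : k)

noncomputable def Fo (o : Bool) : ((G × G) →₀ k) →ₗ[k] ((G × G) →₀ k) →ₗ[k] ((G × G) →₀ k) :=
  Finsupp.linearCombination k fun p => Finsupp.linearCombination k fun q =>
    tm k (G.hstar k p.1 q.1) (Finsupp.single (nod o p.2 q.2) 1)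

noncomputable def pT : ((G × G) →₀ k) →ₗ[k] ((G × G) →₀ k) →ₗ[k] ((G × G) →₀ k) :=
  Finsupp.linearCombination k fun p => Finsupp.linearCombination k fun q =>
    tm k (G.hstar k p.1 q.1) (G.hstar k p.2 q.2)

noncomputable def Dh : (G →₀ k) →ₗ[k] ((G × G) →₀ k) :=
  Finsupp.linearCombination k (G.cop k)

@[simp] lemma star_single (t s : G) (c d : k) :
    star k (single t c) (single s d) = (c * d) • G.hstar k t s := by
  simp [star, smul_smul]

@[simp] lemma graft_single (o : Bool) (a b : G) (c d : k) :
    graft k o (single a c) (single b d) = single (nod o a b) (c * d) := by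
  simp [graft, smul_smul, Finsupp.smul_single]

@[simp] lemma tm_single (u v : G) (c d : k) :
    tm k (single u c) (single v d) = single (u, v) (c * d) := by
  simp [tm, smul_smul, Finsupp.smul_single]

@[simp] lemma Fo_single (o : Bool) (p q : G × G) (c d : k) :
    Fo k o (single p c) (single q d)
      = (c * d) • tm k (G.hstar k p.1 q.1) (single (nod o p.2 q.2) 1) := by
  simp [Fo, smul_smul]

@[simp] lemma pT_single (p q : G × G) (c d : k) :
    pT k (single p c) (single q d)
      = (c * d) • tm k (G.hstar k p.1 q.1) (G.hstar k p.2 q.2) := by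
  simp [pT, smul_smul]

@[simp] lemma Dh_single (u : G) (c : k) : Dh k (single u c) = c • G.cop k u := by
  simp [Dh]

@[simp] lemma hstar_one_left (t : G) : G.hstar k G.one t = single t 1 := by
  rw [G.hstar]

@[simp] lemma hstar_one_right (t : G) : G.hstar k t G.one = single t 1 := by
  cases t <;> rw [G.hstar]

@[simp] lemma cop_one : G.cop k G.one = single (G.one, G.one) 1 := by
  rw [G.cop]

end S14
namespace S14
open Finsupp

variable (k : Type*) [CommRing k]

lemma graftR (o : Bool) (d : G) (X : G →₀ k) :
    graft k o X (single d 1) = Finsupp.mapDomain (fun u => nod o u d) X := by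
  induction X using Finsupp.induction_linear with
  | zero => simp
  | add f g hf hg => simp only [map_add, LinearMap.add_apply, Finsupp.mapDomain_add, hf, hg]
  | single a c => simp

lemma graftL (o : Bool) (a : G) (X : G →₀ k) :
    graft k o (single a 1) X = Finsupp.mapDomain (fun u => nod o a u) X := by
  induction X using Finsupp.induction_linear with
  | zero => simp
  | add f g hf hg => simp only [map_add, Finsupp.mapDomain_add, hf, hg]
  | single b c => simp

/-- The product rule for `∗_h`, in `graft` form. -/
lemma hstar_nod (o o' : Bool) (a b c d : G) :
    G.hstar k (nod o a b) (nod o' c d)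
      = graft k o' (G.hstar k (nod o a b) c) (single d 1)
        + graft k o (single a 1) (G.hstar k b (nod o' c d)) := by
  rw [graftR, graftL]
  cases o <;> cases o' <;> simp only [nod] <;> rw [G.hstar]

lemma star_nod (o o' : Bool) (a b c d : G) :
    star k (single (nod o a b) 1) (single (nod o' c d) 1)
      = graft k o' (star k (single (nod o a b) 1) (single c 1)) (single d 1)
        + graft k o (single a 1) (star k (single b 1) (single (nod o' c d) 1)) := by
  simp only [star_single, one_mul, one_smul]
  exact hstar_nod k o o' a b c d

lemma star_one_left (X : G →₀ k) : star k (single G.one 1) X = X := by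
  induction X using Finsupp.induction_linear with
  | zero => simp
  | add f g hf hg => simp only [map_add, hf, hg]
  | single s c => simp [Finsupp.smul_single]

lemma star_one_right (X : G →₀ k) : star k X (single G.one 1) = X := by
  induction X using Finsupp.induction_linear with
  | zero => simp
  | add f g hf hg => simp only [map_add, LinearMap.add_apply, hf, hg]
  | single t c => simp [Finsupp.smul_single]

end S14
namespace S14
open Finsupp

variable (k : Type*) [CommRing k]

lemma E1 (o' o'' : Bool) (d e f : G) (X : G →₀ k) :
    star k (graft k o' X (single d 1)) (single (nod o'' e f) 1)
      = graft k o'' (star k (graft k o' X (single d 1)) (single e 1)) (single f 1)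
        + graft k o' X (star k (single d 1) (single (nod o'' e f) 1)) := by
  induction X using Finsupp.induction_linear with
  | zero => simp
  | add p q hp hq =>
      simp only [map_add, LinearMap.add_apply, hp, hq]; abel
  | single u c =>
      have core : star k (graft k o' (single u 1) (single d 1)) (single (nod o'' e f) 1)
          = graft k o'' (star k (graft k o' (single u 1) (single d 1)) (single e 1)) (single f 1)
            + graft k o' (single u 1) (star k (single d 1) (single (nod o'' e f) 1)) := by
        simp only [graft_single, mul_one]
        exact star_nod k o' o'' u d e f
      rw [← Finsupp.smul_single_one u c]
      simp only [map_smul, LinearMap.smul_apply]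
      rw [core, smul_add]

lemma E2 (o o'' : Bool) (a e f : G) (Y : G →₀ k) :
    star k (graft k o (single a 1) Y) (single (nod o'' e f) 1)
      = graft k o'' (star k (graft k o (single a 1) Y) (single e 1)) (single f 1)
        + graft k o (single a 1) (star k Y (single (nod o'' e f) 1)) := by
  induction Y using Finsupp.induction_linear with
  | zero => simp
  | add p q hp hq =>
      simp only [map_add, LinearMap.add_apply, hp, hq]; abel
  | single v c =>
      have core : star k (graft k o (single a 1) (single v 1)) (single (nod o'' e f) 1)
          = graft k o'' (star k (graft k o (single a 1) (single v 1)) (single e 1)) (single f 1)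
            + graft k o (single a 1) (star k (single v 1) (single (nod o'' e f) 1)) := by
        simp only [graft_single, mul_one]
        exact star_nod k o o'' a v e f
      rw [← Finsupp.smul_single_one v c]
      simp only [map_smul, LinearMap.smul_apply]
      rw [core, smul_add]

lemma E3 (o o'' : Bool) (a b f : G) (Z : G →₀ k) :
    star k (single (nod o a b) 1) (graft k o'' Z (single f 1))
      = graft k o'' (star k (single (nod o a b) 1) Z) (single f 1)
        + graft k o (single a 1) (star k (single b 1) (graft k o'' Z (single f 1))) := by
  induction Z using Finsupp.induction_linear with
  | zero => simp
  | add p q hp hq =>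
      simp only [map_add, LinearMap.add_apply, hp, hq]; abel
  | single z c =>
      have core : star k (single (nod o a b) 1) (graft k o'' (single z 1) (single f 1))
          = graft k o'' (star k (single (nod o a b) 1) (single z 1)) (single f 1)
            + graft k o (single a 1)
                (star k (single b 1) (graft k o'' (single z 1) (single f 1))) := by
        simp only [graft_single, mul_one]
        exact star_nod k o o'' a b z f
      rw [← Finsupp.smul_single_one z c]
      simp only [map_smul, LinearMap.smul_apply]
      rw [core, smul_add]

lemma E4 (o o' : Bool) (a b c : G) (W : G →₀ k) :
    star k (single (nod o a b) 1) (graft k o' (single c 1) W)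
      = graft k o' (star k (single (nod o a b) 1) (single c 1)) W
        + graft k o (single a 1) (star k (single b 1) (graft k o' (single c 1) W)) := by
  induction W using Finsupp.induction_linear with
  | zero => simp
  | add p q hp hq =>
      simp only [map_add, LinearMap.add_apply, hp, hq]; abel
  | single w e =>
      have core : star k (single (nod o a b) 1) (graft k o' (single c 1) (single w 1))
          = graft k o' (star k (single (nod o a b) 1) (single c 1)) (single w 1)
            + graft k o (single a 1)
                (star k (single b 1) (graft k o' (single c 1) (single w 1))) := by
        simp only [graft_single, mul_one]
        exact star_nod k o o' a b c w
      rw [← Finsupp.smul_single_one w e]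
      simp only [map_smul, LinearMap.smul_apply]
      rw [core, smul_add]

lemma assoc_step (o o' o'' : Bool) (a b c d e f : G)
    (ih1 : star k (star k (single (nod o a b) 1) (single (nod o' c d) 1)) (single e 1)
      = star k (single (nod o a b) 1) (star k (single (nod o' c d) 1) (single e 1)))
    (ih2 : star k (star k (single b 1) (single (nod o' c d) 1)) (single (nod o'' e f) 1)
      = star k (single b 1) (star k (single (nod o' c d) 1) (single (nod o'' e f) 1))) :
    star k (star k (single (nod o a b) 1) (single (nod o' c d) 1)) (single (nod o'' e f) 1)
      = star k (single (nod o a b) 1)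
          (star k (single (nod o' c d) 1) (single (nod o'' e f) 1)) := by
  conv_lhs => rw [star_nod k o o' a b c d]
  rw [map_add, LinearMap.add_apply,
    E1 k o' o'' d e f (star k (single (nod o a b) 1) (single c 1)),
    E2 k o o'' a e f (star k (single b 1) (single (nod o' c d) 1)), ih2]
  conv_rhs => rw [star_nod k o' o'' c d e f]
  rw [map_add,
    E3 k o o'' a b f (star k (single (nod o' c d) 1) (single e 1)),
    E4 k o o' a b c (star k (single d 1) (single (nod o'' e f) 1)), ← ih1]
  conv_rhs => rw [star_nod k o o' a b c d]
  conv_lhs => rw [star_nod k o' o'' c d e f]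
  simp only [map_add, LinearMap.add_apply]
  abel

lemma assoc_fuel : ∀ (n : ℕ) (t s r : G), t.order + s.order + r.order ≤ n →
    star k (star k (single t 1) (single s 1)) (single r 1)
      = star k (single t 1) (star k (single s 1) (single r 1)) := by
  intro n
  induction n with
  | zero =>
      intro t s r h
      obtain rfl := order_eq_zero (t := t) (by omega)
      obtain rfl := order_eq_zero (t := s) (by omega)
      obtain rfl := order_eq_zero (t := r) (by omega)
      rw [star_one_left, star_one_left]
  | succ n ih =>
      intro t s r h
      rcases nod_cases t with rfl | ⟨o, a, b, rfl⟩
      · rw [star_one_left, star_one_left]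
      rcases nod_cases s with rfl | ⟨o', c, d, rfl⟩
      · rw [star_one_right, star_one_left]
      rcases nod_cases r with rfl | ⟨o'', e, f, rfl⟩
      · rw [star_one_right, star_one_right]
      refine assoc_step k o o' o'' a b c d e f (ih _ _ _ ?_) (ih _ _ _ ?_) <;>
        · simp only [nod_order] at h ⊢
          cases e <;> cases f <;> simp [G.order] at h ⊢ <;> omega
  
lemma assoc_single (t s r : G) :
    star k (star k (single t 1) (single s 1)) (single r 1)
      = star k (single t 1) (star k (single s 1) (single r 1)) :=
  assoc_fuel k _ t s r le_rfl

lemma star_assoc (X Y Z : G →₀ k) :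
    star k (star k X Y) Z = star k X (star k Y Z) := by
  induction X using Finsupp.induction_linear with
  | zero => simp
  | add p q hp hq => simp only [map_add, LinearMap.add_apply, hp, hq]
  | single t c =>
    induction Y using Finsupp.induction_linear with
    | zero => simp
    | add p q hp hq => simp only [map_add, LinearMap.add_apply, hp, hq]
    | single s d =>
      induction Z using Finsupp.induction_linear with
      | zero => simp
      | add p q hp hq => simp only [map_add, LinearMap.add_apply, hp, hq]
      | single r e =>
        rw [← Finsupp.smul_single_one t c, ← Finsupp.smul_single_one s d,
          ← Finsupp.smul_single_one r e]
        simp only [map_smul, LinearMap.smul_apply, assoc_single]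

end S14
namespace S14
open Finsupp

variable (k : Type*) [CommRing k]

lemma K1 (o : Bool) (r : G × G) (A B : G →₀ k) :
    Fo k o (tm k A B) (single r 1)
      = tm k (star k A (single r.1 1)) (graft k o B (single r.2 1)) := by
  induction A using Finsupp.induction_linear with
  | zero => simp
  | add p q hp hq => simp only [map_add, LinearMap.add_apply, hp, hq]
  | single u c =>
    induction B using Finsupp.induction_linear with
    | zero => simp
    | add p q hp hq => simp only [map_add, LinearMap.add_apply, hp, hq]
    | single v d =>
      rw [← Finsupp.smul_single_one u c, ← Finsupp.smul_single_one v d]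
      simp only [map_smul, LinearMap.smul_apply, tm_single, graft_single, star_single,
        Fo_single, one_mul, one_smul, mul_one]

lemma K2 (o : Bool) (p : G × G) (A B : G →₀ k) :
    Fo k o (single p 1) (tm k A B)
      = tm k (star k (single p.1 1) A) (graft k o (single p.2 1) B) := by
  induction A using Finsupp.induction_linear with
  | zero => simp
  | add f g hf hg => simp only [map_add, LinearMap.add_apply, hf, hg]
  | single u c =>
    induction B using Finsupp.induction_linear with
    | zero => simp
    | add f g hf hg => simp only [map_add, LinearMap.add_apply, hf, hg]
    | single v d =>
      rw [← Finsupp.smul_single_one u c, ← Finsupp.smul_single_one v d]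
      simp only [map_smul, LinearMap.smul_apply, tm_single, graft_single, star_single,
        Fo_single, one_mul, one_smul, mul_one]

lemma P2 (x y : G) (U V : G →₀ k) :
    pT k (tm k U (single x 1)) (tm k V (single y 1))
      = tm k (star k U V) (star k (single x 1) (single y 1)) := by
  induction U using Finsupp.induction_linear with
  | zero => simp
  | add f g hf hg => simp only [map_add, LinearMap.add_apply, hf, hg]
  | single u c =>
    induction V using Finsupp.induction_linear with
    | zero => simp
    | add f g hf hg => simp only [map_add, LinearMap.add_apply, hf, hg]
    | single v d =>
      rw [← Finsupp.smul_single_one u c, ← Finsupp.smul_single_one v d]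
      simp only [map_smul, LinearMap.smul_apply, tm_single, pT_single, star_single,
        one_mul, one_smul, mul_one]

lemma P3 (x : G) (w : G × G) (U : G →₀ k) :
    pT k (tm k U (single x 1)) (single w 1)
      = tm k (star k U (single w.1 1)) (star k (single x 1) (single w.2 1)) := by
  induction U using Finsupp.induction_linear with
  | zero => simp
  | add f g hf hg => simp only [map_add, LinearMap.add_apply, hf, hg]
  | single u c =>
      rw [← Finsupp.smul_single_one u c]
      simp only [map_smul, LinearMap.smul_apply, tm_single, pT_single, star_single,
        one_mul, one_smul, mul_one]

lemma P4 (y : G) (w : G × G) (V : G →₀ k) :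
    pT k (single w 1) (tm k V (single y 1))
      = tm k (star k (single w.1 1) V) (star k (single w.2 1) (single y 1)) := by
  induction V using Finsupp.induction_linear with
  | zero => simp
  | add f g hf hg => simp only [map_add, LinearMap.add_apply, hf, hg]
  | single v d =>
      rw [← Finsupp.smul_single_one v d]
      simp only [map_smul, LinearMap.smul_apply, tm_single, pT_single, star_single,
        one_mul, one_smul, mul_one]

lemma pT_oneL (Y : (G × G) →₀ k) : pT k (single (G.one, G.one) 1) Y = Y := by
  induction Y using Finsupp.induction_linear with
  | zero => simp
  | add f g hf hg => simp only [map_add, hf, hg]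
  | single q d =>
      rw [← Finsupp.smul_single_one q d]
      simp only [map_smul, pT_single, hstar_one_left, tm_single, one_mul, one_smul, mul_one]

lemma pT_oneR (X : (G × G) →₀ k) : pT k X (single (G.one, G.one) 1) = X := by
  induction X using Finsupp.induction_linear with
  | zero => simp
  | add f g hf hg => simp only [map_add, LinearMap.add_apply, hf, hg]
  | single p c =>
      rw [← Finsupp.smul_single_one p c]
      simp only [map_smul, LinearMap.smul_apply, pT_single, hstar_one_right, tm_single,
        one_mul, one_smul, mul_one]

end S14
namespace S14
open Finsupp

variable (k : Type*) [CommRing k]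

lemma bil_sum {α β M : Type*} [AddCommMonoid M] [Module k M]
    (B : (α →₀ k) →ₗ[k] (β →₀ k) →ₗ[k] M) (x : α →₀ k) (y : β →₀ k) :
    B x y = x.sum fun p c => y.sum fun q d => (c * d) • B (single p 1) (single q 1) := by
  have h1 : B x y = x.sum fun p c => B (single p c) y := by
    conv_lhs => rw [← Finsupp.sum_single x]
    exact map_finsuppSum (LinearMap.flip B y) x Finsupp.single
  rw [h1]
  refine Finsupp.sum_congr fun p _ => ?_
  have h2 : B (single p (x p)) y = y.sum fun q d => B (single p (x p)) (single q d) := by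
    conv_lhs => rw [← Finsupp.sum_single y]
    exact map_finsuppSum (B (single p (x p))) y Finsupp.single
  rw [h2]
  refine Finsupp.sum_congr fun q _ => ?_
  rw [← Finsupp.smul_single_one p (x p), ← Finsupp.smul_single_one q (y q)]
  simp only [map_smul, LinearMap.smul_apply, smul_smul, mul_comm]

lemma mapDomain_fst (w : G) (A : G →₀ k) :
    Finsupp.mapDomain (fun u => (u, w)) A = tm k A (single w 1) := by
  induction A using Finsupp.induction_linear with
  | zero => simp
  | add f g hf hg => simp only [Finsupp.mapDomain_add, map_add, LinearMap.add_apply, hf, hg]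
  | single u c => simp

lemma tensorMul_eq (x y : G →₀ k) : tensorMul k x y = tm k x y := by
  rw [tensorMul, bil_sum k (tm k)]
  refine Finsupp.sum_congr fun u _ => Finsupp.sum_congr fun v _ => ?_
  simp [Finsupp.smul_single]

lemma prodT_eq (x y : (G × G) →₀ k) : prodT k x y = pT k x y := by
  rw [prodT, bil_sum k (pT k)]
  refine Finsupp.sum_congr fun p _ => Finsupp.sum_congr fun q _ => ?_
  simp only [pT_single, one_mul, one_smul, tensorMul_eq]

lemma copeq (o : Bool) (a b : G) :
    G.cop k (nod o a b)
      = Fo k o (G.cop k a) (G.cop k b) + single (nod o a b, G.one) 1 := by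
  rw [bil_sum k (Fo k o)]
  cases o <;>
    · simp only [nod]
      rw [G.cop]
      congr 1
      refine Finsupp.sum_congr fun p _ => Finsupp.sum_congr fun q _ => ?_
      rw [mapDomain_fst]
      simp only [Fo_single, one_mul, one_smul, nod]

end S14
namespace S14
open Finsupp

variable (k : Type*) [CommRing k]

lemma M2 (o' : Bool) (t : G) (C D : (G × G) →₀ k) :
    Fo k o' (pT k (single (t, G.one) 1) C) D
      = pT k (single (t, G.one) 1) (Fo k o' C D) := by
  induction C using Finsupp.induction_linear with
  | zero => simp
  | add f g hf hg => simp only [map_add, LinearMap.add_apply, hf, hg]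
  | single q cq =>
    induction D using Finsupp.induction_linear with
    | zero => simp
    | add f g hf hg => simp only [map_add, LinearMap.add_apply, hf, hg]
    | single r cr =>
      have core : Fo k o' (pT k (single (t, G.one) 1) (single q 1)) (single r 1)
          = pT k (single (t, G.one) 1) (Fo k o' (single q 1) (single r 1)) := by
        simp only [pT_single, Fo_single, one_mul, one_smul, hstar_one_left]
        rw [K1 k o' r (G.hstar k t q.1) (single q.2 1),
          P4 k (nod o' q.2 r.2) (t, G.one) (G.hstar k q.1 r.1)]
        simp only [graft_single, star_single, one_mul, one_smul, mul_one, hstar_one_left]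
        have h := star_assoc k (single t 1) (single q.1 1) (single r.1 1)
        simp only [star_single, one_mul, one_smul] at h
        rw [h]
      rw [← Finsupp.smul_single_one q cq, ← Finsupp.smul_single_one r cr]
      simp only [map_smul, LinearMap.smul_apply]
      rw [core]

lemma M3 (o : Bool) (s : G) (A B : (G × G) →₀ k) :
    Fo k o A (pT k B (single (s, G.one) 1))
      = pT k (Fo k o A B) (single (s, G.one) 1) := by
  induction A using Finsupp.induction_linear with
  | zero => simp
  | add f g hf hg => simp only [map_add, LinearMap.add_apply, hf, hg]
  | single p cp =>
    induction B using Finsupp.induction_linear with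
    | zero => simp
    | add f g hf hg => simp only [map_add, LinearMap.add_apply, hf, hg]
    | single q cq =>
      have core : Fo k o (single p 1) (pT k (single q 1) (single (s, G.one) 1))
          = pT k (Fo k o (single p 1) (single q 1)) (single (s, G.one) 1) := by
        simp only [pT_single, Fo_single, one_mul, one_smul, hstar_one_right]
        rw [K2 k o p (G.hstar k q.1 s) (single q.2 1),
          P3 k (nod o p.2 q.2) (s, G.one) (G.hstar k p.1 q.1)]
        simp only [graft_single, star_single, one_mul, one_smul, mul_one, hstar_one_right]
        have h := star_assoc k (single p.1 1) (single q.1 1) (single s 1)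
        simp only [star_single, one_mul, one_smul] at h
        rw [h]
      rw [← Finsupp.smul_single_one p cp, ← Finsupp.smul_single_one q cq]
      simp only [map_smul, LinearMap.smul_apply]
      rw [core]

lemma M4core (o o' : Bool) (p q γ δ : G × G) :
    Fo k o' (pT k (Fo k o (single p 1) (single q 1)) (single γ 1)) (single δ 1)
      + Fo k o (single p 1) (pT k (single q 1) (Fo k o' (single γ 1) (single δ 1)))
    = pT k (Fo k o (single p 1) (single q 1)) (Fo k o' (single γ 1) (single δ 1)) := by
  simp only [Fo_single, one_mul, one_smul]
  rw [P3 k (nod o p.2 q.2) γ (G.hstar k p.1 q.1),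
    K1 k o' δ (star k (G.hstar k p.1 q.1) (single γ.1 1))
      (star k (single (nod o p.2 q.2) 1) (single γ.2 1)),
    P4 k (nod o' γ.2 δ.2) q (G.hstar k γ.1 δ.1),
    K2 k o p (star k (single q.1 1) (G.hstar k γ.1 δ.1))
      (star k (single q.2 1) (single (nod o' γ.2 δ.2) 1)),
    P2 k (nod o p.2 q.2) (nod o' γ.2 δ.2) (G.hstar k p.1 q.1) (G.hstar k γ.1 δ.1),
    star_assoc k (G.hstar k p.1 q.1) (single γ.1 1) (single δ.1 1),
    ← star_assoc k (single p.1 1) (single q.1 1) (G.hstar k γ.1 δ.1)]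
  simp only [star_single, one_mul, one_smul]
  rw [hstar_nod k o o' p.2 q.2 γ.2 δ.2, map_add]

lemma M4 (o o' : Bool) (A B C D : (G × G) →₀ k) :
    Fo k o' (pT k (Fo k o A B) C) D + Fo k o A (pT k B (Fo k o' C D))
      = pT k (Fo k o A B) (Fo k o' C D) := by
  induction A using Finsupp.induction_linear with
  | zero => simp
  | add f g hf hg =>
      simp only [map_add, LinearMap.add_apply] at hf hg ⊢
      rw [← hf, ← hg]; abel
  | single p cp =>
    induction B using Finsupp.induction_linear with
    | zero => simp
    | add f g hf hg =>
        simp only [map_add, LinearMap.add_apply] at hf hg ⊢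
        rw [← hf, ← hg]; abel
    | single q cq =>
      induction C using Finsupp.induction_linear with
      | zero => simp
      | add f g hf hg =>
          simp only [map_add, LinearMap.add_apply] at hf hg ⊢
          rw [← hf, ← hg]; abel
      | single γ cγ =>
        induction D using Finsupp.induction_linear with
        | zero => simp
        | add f g hf hg =>
            simp only [map_add, LinearMap.add_apply] at hf hg ⊢
            rw [← hf, ← hg]; abel
        | single δ cδ =>
          rw [← Finsupp.smul_single_one p cp, ← Finsupp.smul_single_one q cq,
            ← Finsupp.smul_single_one γ cγ, ← Finsupp.smul_single_one δ cδ]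
          simp only [map_smul, LinearMap.smul_apply, ← smul_add]
          rw [M4core]

lemma Dg1 (o' : Bool) (d : G) (X : G →₀ k) :
    Dh k (graft k o' X (single d 1))
      = Fo k o' (Dh k X) (G.cop k d)
        + tm k (graft k o' X (single d 1)) (single G.one 1) := by
  induction X using Finsupp.induction_linear with
  | zero => simp
  | add f g hf hg => simp only [map_add, LinearMap.add_apply, hf, hg]; abel
  | single u c =>
      have core : Dh k (graft k o' (single u 1) (single d 1))
          = Fo k o' (Dh k (single u 1)) (G.cop k d)
            + tm k (graft k o' (single u 1) (single d 1)) (single G.one 1) := by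
        simp only [graft_single, mul_one, Dh_single, one_smul, tm_single]
        exact copeq k o' u d
      rw [← Finsupp.smul_single_one u c]
      simp only [map_smul, LinearMap.smul_apply]
      rw [core, smul_add]

lemma Dg2 (o : Bool) (a : G) (Y : G →₀ k) :
    Dh k (graft k o (single a 1) Y)
      = Fo k o (G.cop k a) (Dh k Y)
        + tm k (graft k o (single a 1) Y) (single G.one 1) := by
  induction Y using Finsupp.induction_linear with
  | zero => simp
  | add f g hf hg => simp only [map_add, LinearMap.add_apply, hf, hg]; abel
  | single v c =>
      have core : Dh k (graft k o (single a 1) (single v 1))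
          = Fo k o (G.cop k a) (Dh k (single v 1))
            + tm k (graft k o (single a 1) (single v 1)) (single G.one 1) := by
        simp only [graft_single, mul_one, Dh_single, one_smul, tm_single]
        exact copeq k o a v
      rw [← Finsupp.smul_single_one v c]
      simp only [map_smul, LinearMap.smul_apply]
      rw [core, smul_add]

lemma main_step (o o' : Bool) (a b c d : G)
    (ih1 : Dh k (star k (single (nod o a b) 1) (single c 1))
      = pT k (G.cop k (nod o a b)) (G.cop k c))
    (ih2 : Dh k (star k (single b 1) (single (nod o' c d) 1))
      = pT k (G.cop k b) (G.cop k (nod o' c d))) :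
    Dh k (star k (single (nod o a b) 1) (single (nod o' c d) 1))
      = pT k (G.cop k (nod o a b)) (G.cop k (nod o' c d)) := by
  have hσσ : pT k (single (nod o a b, G.one) 1) (single (nod o' c d, G.one) 1)
      = tm k (graft k o' (star k (single (nod o a b) 1) (single c 1)) (single d 1))
          (single G.one 1)
        + tm k (graft k o (single a 1) (star k (single b 1) (single (nod o' c d) 1)))
            (single G.one 1) := by
    simp only [pT_single, one_mul, one_smul, hstar_one_left]
    rw [hstar_nod k o o' a b c d, map_add, LinearMap.add_apply]
    simp only [star_single, one_mul, one_smul]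
  rw [star_nod k o o' a b c d, map_add,
    Dg1 k o' d (star k (single (nod o a b) 1) (single c 1)),
    Dg2 k o a (star k (single b 1) (single (nod o' c d) 1)),
    ih1, ih2, copeq k o a b, copeq k o' c d]
  simp only [map_add, LinearMap.add_apply]
  rw [← M4 k o o' (G.cop k a) (G.cop k b) (G.cop k c) (G.cop k d),
    M2 k o' (nod o a b) (G.cop k c) (G.cop k d),
    M3 k o (nod o' c d) (G.cop k a) (G.cop k b),
    hσσ]
  abel

lemma main_fuel : ∀ (n : ℕ) (t s : G), t.order + s.order ≤ n →
    Dh k (star k (single t 1) (single s 1)) = pT k (G.cop k t) (G.cop k s) := by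
  intro n
  induction n with
  | zero =>
      intro t s h
      obtain rfl := order_eq_zero (t := t) (by omega)
      obtain rfl := order_eq_zero (t := s) (by omega)
      rw [star_one_left, cop_one, pT_oneL]
      simp
  | succ n ih =>
      intro t s h
      rcases nod_cases t with rfl | ⟨o, a, b, rfl⟩
      · rw [star_one_left, cop_one, pT_oneL]; simp
      rcases nod_cases s with rfl | ⟨o', c, d, rfl⟩
      · rw [star_one_right, cop_one, pT_oneR]; simp
      refine main_step k o o' a b c d (ih _ _ ?_) (ih _ _ ?_) <;>
        · simp only [nod_order] at h ⊢; omega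

end S14
/-- The coproduct `Δ_h` on `k[Y^∞]_h` is an algebra homomorphism:
`Δ_h(t ∗_h s) = Δ_h(t) ∗_h Δ_h(s)`, the product on the tensor square being
componentwise. -/
theorem stmt14 (k : Type*) [CommRing k] [CharZero k] (t s : G) :
    ((G.hstar k t s).sum fun u a => a • G.cop k u) = prodT k (G.cop k t) (G.cop k s) := by
  have h1 : ((G.hstar k t s).sum fun u a => a • G.cop k u) = S14.Dh k (G.hstar k t s) := by
    simp only [S14.Dh]
    rw [Finsupp.linearCombination_apply]
  have h2 := S14.main_fuel k (t.order + s.order) t s le_rfl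
  rw [h1, S14.prodT_eq, ← h2]
  congr 1
  simp
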